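/- Let K be a field of characteristic ≠ 2 and δ ∈ K nonzero. If there exist x₁, x₂, x₃ ∈ K with x₂² - δ = x₁² and x₂² + δ = x₃² and x₁ - 2x₂ + x₃ ≠ 0, then there exist X, Y ∈ K with Y ≠ 0 and Y² = X³ - δ²X; explicitly X = (x₁ - x₃)δ/(x₁ - 2x₂ + x₃) and Y = -2δ²/(x₁ - 2x₂ + x₃). -/

import Mathlib

theorem congruum_to_elliptic (K : Type*) [Field K] (h2 : (2 : K) ≠ 0)
    (δ : K) (hδ : δ ≠ 0) (x₁ x₂ x₃ : K)
    (h₁ : x₂ ^ 2 - δ = x₁ ^ 2) (h₃ : x₂ ^ 2 + δ = x₃ ^ 2)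
    (hs : x₁ - 2 * x₂ + x₃ ≠ 0) :
    ∃ X Y : K, Y ≠ 0 ∧ Y ^ 2 = X ^ 3 - δ ^ 2 * X ∧
      X = (x₁ - x₃) * δ / (x₁ - 2 * x₂ + x₃) ∧
      Y = -(2 * δ ^ 2) / (x₁ - 2 * x₂ + x₃) := by
  refine ⟨(x₁ - x₃) * δ / (x₁ - 2 * x₂ + x₃), -(2 * δ ^ 2) / (x₁ - 2 * x₂ + x₃),
    ?_, ?_, rfl, rfl⟩
  · exact div_ne_zero (neg_ne_zero.mpr (mul_ne_zero h2 (pow_ne_zero _ hδ))) hs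
  · have key : δ * (x₁ - 2 * x₂ + x₃) = (x₁ - x₃) * (x₂ - x₃) * (x₁ - x₂) := by
      linear_combination (x₂ - x₃) * h₁ + (x₁ - x₂) * h₃
    field_simp
    linear_combination 4 * key
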